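/- Let p, q be monic real polynomials of degrees n and n−1 such that SRemS(p,q) has no degree breakdown, with signs ε_1,…,ε_{n−1} ∈ {−1,+1} and β_1,…,β_{n−1} > 0 arising in its defining recurrence. Define the classical signed remainder sequence r_0 = p, r_1 = q, and r_{k+1} = −(remainder of r_{k−1} in the Euclidean division by r_k) for k ≥ 1. Then the leading coefficients of r_0 and r_1 are positive, and for 2 ≤ k ≤ n the sign of the leading coefficient of r_k equals the product of the ε_j over all indices j with 1 ≤ j ≤ k−1 and j ≡ k−1 (mod 2); that is, the sequence of signs of leading coefficients is (1, 1, ε_1, ε_2, ε_1ε_3, ε_2ε_4, ε_1ε_3ε_5, …). -/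

import Mathlib

open Polynomial Matrix BigOperators Finset

/-- Data witnessing that the signed remainders sequence `SRemS(p,q)` of the monic
polynomials `p` (degree `n`) and `q` (degree `n-1`) has no degree breakdown:
a sequence of monic polynomials `P k` of degree `n - k` with `P 0 = p`, `P 1 = q`,
satisfying the recurrence `P k = (X - α_{k+1})·P (k+1) - ε_{k+1}·β_{k+1}²·P (k+2)`
with `β_{k+1} > 0` and `ε_{k+1} = ±1`, and `P (n-1) = X - α_n`. -/
structure SRemSData (n : ℕ) (p q : Polynomial ℝ) : Type where
  P : ℕ → Polynomial ℝ
  α : ℕ → ℝ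
  β : ℕ → ℝ
  ε : ℕ → ℝ
  hP0 : P 0 = p
  hP1 : P 1 = q
  hmonic : ∀ k, k ≤ n → (P k).Monic
  hdeg : ∀ k, k ≤ n → (P k).natDegree = n - k
  hrec : ∀ k, k + 2 ≤ n →
    P k = (Polynomial.X - Polynomial.C (α (k + 1))) * P (k + 1)
            - Polynomial.C (ε (k + 1) * β (k + 1) ^ 2) * P (k + 2)
  hlast : 1 ≤ n → P (n - 1) = Polynomial.X - Polynomial.C (α n)
  hβ : ∀ k, 1 ≤ k → k ≤ n - 1 → 0 < β k
  hε : ∀ k, 1 ≤ k → k ≤ n - 1 → ε k = 1 ∨ ε k = -1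

/-- tridiagonal matrix -/
def tridiag (n : ℕ) (a b c : ℕ → ℝ) : Matrix (Fin n) (Fin n) ℝ :=
  Matrix.of fun i j =>
    if (i : ℕ) = (j : ℕ) then a (n - (i : ℕ))
    else if (i : ℕ) = (j : ℕ) + 1 then b (n - 1 - (j : ℕ))
    else if (j : ℕ) = (i : ℕ) + 1 then c (n - 1 - (i : ℕ))
    else 0

/-- The tridiagonal matrix `Td(p,q)` associated to a no-degree-breakdown signed
remainders sequence. -/
def SRemSData.td {n : ℕ} {p q : Polynomial ℝ} (d : SRemSData n p q) :
    Matrix (Fin n) (Fin n) ℝ :=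
  tridiag n d.α d.β fun k => d.ε k * d.β k

/-- classical signed remainder sequence -/
noncomputable def srem (p q : Polynomial ℝ) : ℕ → Polynomial ℝ
  | 0 => p
  | 1 => q
  | (k + 2) => -(srem p q k % srem p q (k + 1))

/-- Let `p, q` be monic of degrees `n`, `n-1` with `SRemS(p,q)` having no degree
breakdown, with signs `ε_k` and `β_k > 0` from its defining recurrence.  For the
classical signed remainder sequence `r_0 = p`, `r_1 = q`,
`r_{k+1} = −(r_{k−1} mod r_k)`, the leading coefficients of `r_0` and `r_1` are
positive, and for `2 ≤ k ≤ n` the sign of the leading coefficient of `r_k` equals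
`∏ ε_j` over `1 ≤ j ≤ k−1` with `j ≡ k−1 (mod 2)`. -/
theorem stmt_3 (n : ℕ) (hn : 1 ≤ n) (p q : Polynomial ℝ)
    (hp : p.Monic) (hpdeg : p.natDegree = n)
    (hq : q.Monic) (hqdeg : q.natDegree = n - 1)
    (d : SRemSData n p q) :
    0 < (srem p q 0).leadingCoeff ∧ 0 < (srem p q 1).leadingCoeff ∧
      ∀ k, 2 ≤ k → k ≤ n →
        Real.sign ((srem p q k).leadingCoeff) =
          ∏ j ∈ (Finset.Icc 1 (k - 1)).filter (fun j => j % 2 = (k - 1) % 2), d.ε j := by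
  classical
  set S : ℕ → Finset ℕ :=
    fun k => (Finset.Icc 1 (k - 1)).filter (fun j => j % 2 = (k - 1) % 2) with hS
  set c : ℕ → ℝ := fun k => ∏ j ∈ S k, (d.ε j * d.β j ^ 2) with hc
  have hSsub : ∀ k, k ≤ n → ∀ j ∈ S k, 1 ≤ j ∧ j ≤ n - 1 := by
    intro k hk j hj
    simp only [hS, Finset.mem_filter, Finset.mem_Icc] at hj
    omega
  have hfacpos : ∀ k, k ≤ n → ∀ j ∈ S k, d.ε j = 1 ∨ d.ε j = -1 := by
    intro k hk j hj
    obtain ⟨h1, h2⟩ := hSsub k hk j hj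
    exact d.hε j h1 h2
  have hcne : ∀ k, k ≤ n → c k ≠ 0 := by
    intro k hk
    refine Finset.prod_ne_zero_iff.mpr ?_
    intro j hj
    obtain ⟨h1, h2⟩ := hSsub k hk j hj
    have hβ := d.hβ j h1 h2
    rcases d.hε j h1 h2 with h | h <;> rw [h] <;> nlinarith
  have hSstep : ∀ k, S (k + 2) = insert (k + 1) (S k) := by
    intro k
    ext j
    simp only [hS, Finset.mem_insert, Finset.mem_filter, Finset.mem_Icc]
    omega
  have hSnotmem : ∀ k, (k + 1) ∉ S k := by
    intro k hmem
    simp only [hS, Finset.mem_filter, Finset.mem_Icc] at hmem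
    omega
  have hcstep : ∀ k, c (k + 2) = d.ε (k + 1) * d.β (k + 1) ^ 2 * c k := by
    intro k
    simp only [hc]
    rw [hSstep k, Finset.prod_insert (hSnotmem k)]
  have hS0 : S 0 = ∅ := by simp [hS]
  have hS1 : S 1 = ∅ := by simp [hS]
  -- the key identity
  have key : ∀ k, k ≤ n → srem p q k = Polynomial.C (c k) * d.P k := by
    intro k
    induction k using Nat.twoStepInduction with
    | zero => intro _; simp [srem, hc, hS0, d.hP0]
    | one => intro _; simp [srem, hc, hS1, d.hP1]
    | more k ih ih1 =>
      intro hkn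
      have hk : k ≤ n := by omega
      have hk1 : k + 1 ≤ n := by omega
      have hmon1 : (d.P (k + 1)).Monic := d.hmonic _ hk1
      have hc1ne : c (k + 1) ≠ 0 := hcne _ hk1
      -- degree bound
      have hdeg2 : (Polynomial.C (d.ε (k + 1) * d.β (k + 1) ^ 2) * d.P (k + 2)).degree
          < (d.P (k + 1)).degree := by
        have h1 : (Polynomial.C (d.ε (k + 1) * d.β (k + 1) ^ 2) * d.P (k + 2)).degree
            ≤ (d.P (k + 2)).degree := by
          refine (Polynomial.degree_mul_le _ _).trans ?_
          calc (Polynomial.C (d.ε (k + 1) * d.β (k + 1) ^ 2)).degree + (d.P (k + 2)).degree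
              ≤ 0 + (d.P (k + 2)).degree := add_le_add Polynomial.degree_C_le le_rfl
            _ = (d.P (k + 2)).degree := zero_add _
        apply lt_of_le_of_lt h1
        rw [Polynomial.degree_eq_natDegree (d.hmonic _ hkn).ne_zero,
          Polynomial.degree_eq_natDegree hmon1.ne_zero,
          d.hdeg _ hkn, d.hdeg _ hk1]
        exact_mod_cast Nat.sub_lt_sub_left (by omega) (by omega)
      -- compute P k %ₘ P (k+1)
      have hmod : d.P k %ₘ d.P (k + 1)
          = -(Polynomial.C (d.ε (k + 1) * d.β (k + 1) ^ 2) * d.P (k + 2)) := by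
        have := (Polynomial.div_modByMonic_unique (f := d.P k) (g := d.P (k + 1))
          (Polynomial.X - Polynomial.C (d.α (k + 1)))
          (-(Polynomial.C (d.ε (k + 1) * d.β (k + 1) ^ 2) * d.P (k + 2))) hmon1
          ⟨by rw [d.hrec k hkn]; ring, by simpa using hdeg2⟩)
        exact this.2
      -- relate % and %ₘ
      have hlead : (Polynomial.C (c (k + 1)) * d.P (k + 1)).leadingCoeff = c (k + 1) := by
        rw [Polynomial.leadingCoeff_mul, Polynomial.leadingCoeff_C, hmon1.leadingCoeff, mul_one]
      have hmodeq : srem p q k % srem p q (k + 1)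
          = Polynomial.C (c k) * (d.P k %ₘ d.P (k + 1)) := by
        rw [ih hk, ih1 hk1, Polynomial.mod_def, hlead]
        have : Polynomial.C (c (k + 1)) * d.P (k + 1) * Polynomial.C (c (k + 1))⁻¹
            = d.P (k + 1) := by
          rw [mul_comm (Polynomial.C (c (k + 1))) (d.P (k + 1)), mul_assoc,
            ← Polynomial.C_mul, mul_inv_cancel₀ hc1ne, Polynomial.C_1, mul_one]
        rw [this, ← smul_eq_C_mul, ← smul_eq_C_mul, Polynomial.smul_modByMonic]
      show -(srem p q k % srem p q (k + 1)) = _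
      rw [hmodeq, hmod, hcstep k]
      push_cast [Polynomial.C_mul]
      ring
  have hlc : ∀ k, k ≤ n → (srem p q k).leadingCoeff = c k := by
    intro k hk
    rw [key k hk, Polynomial.leadingCoeff_mul, Polynomial.leadingCoeff_C, (d.hmonic k hk).leadingCoeff, mul_one]
  refine ⟨?_, ?_, ?_⟩
  · show (0:ℝ) < p.leadingCoeff
    rw [hp.leadingCoeff]; norm_num
  · show (0:ℝ) < q.leadingCoeff
    rw [hq.leadingCoeff]; norm_num
  · intro k hk2 hkn
    rw [hlc k hkn]
    have hsplit : c k = (∏ j ∈ S k, d.ε j) * ∏ j ∈ S k, d.β j ^ 2 := by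
      rw [hc, ← Finset.prod_mul_distrib]
    have hβpos : (0:ℝ) < ∏ j ∈ S k, d.β j ^ 2 := by
      apply Finset.prod_pos
      intro j hj
      obtain ⟨h1, h2⟩ := hSsub k hkn j hj
      exact pow_pos (d.hβ j h1 h2) 2
    rcases Finset.prod_induction (fun j => d.ε j) (fun x => x = 1 ∨ x = -1)
        (by rintro x y (rfl | rfl) (rfl | rfl) <;> norm_num)
        (by norm_num) (hfacpos k hkn) with hε1 | hε1
    · rw [hsplit, hε1, one_mul, Real.sign_of_pos hβpos]
    · rw [hsplit, hε1, neg_one_mul]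
      exact Real.sign_of_neg (by linarith)
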